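/- Let K be a non-pure complex cubic field, and let F(x,y) = ax^3 + bx^2y + cxy^2 + dy^3 be an irreducible integral binary cubic form corresponding to an order in K, with θ the real root of F(x,1). Then the element (3bd θ^{-1} + 2bc + 3ac θ) is NOT a rational multiple of (9ad θ^{-1} + (b^2 + 3ac) + 3ab θ) in R; equivalently, the real part (3bd θ^{-1} + 2bc + 3acθ)/(9adθ^{-1} + (b^2+3ac) + 3abθ) of the shape of the order is irrational. Here one may assume: a, d ≠ 0, b, c not both zero, in fact b ≠ 0 and c ≠ 0, b^2 - 3ac ≠ 0, θ is irrational of degree 3 over Q, and F(θ,1) = 0. -/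

import Mathlib

/-- Irrationality of the real part of the shape of a non-pure complex cubic
order: if `F = a x³ + b x² y + c x y² + d y³` corresponds to an order in a
non-pure complex cubic field (so `a, d, b, c ≠ 0`, `b² - 3ac ≠ 0`) with real
root `θ` of `F(x,1)` of degree 3 over ℚ, then `3bd θ⁻¹ + 2bc + 3ac θ` is not a
rational multiple of `9ad θ⁻¹ + (b² + 3ac) + 3ab θ`. -/
theorem stmt16 (a b c d : ℤ) (θ : ℝ)
    (ha : a ≠ 0) (hd : d ≠ 0) (hb : b ≠ 0) (hc : c ≠ 0)
    (hbc : b ^ 2 - 3 * a * c ≠ 0) (hθ0 : θ ≠ 0)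
    (hdeg3 : ∀ p q r : ℚ, (p : ℝ) + q * θ + r * θ ^ 2 = 0 → p = 0 ∧ q = 0 ∧ r = 0)
    (hroot : (a : ℝ) * θ ^ 3 + b * θ ^ 2 + c * θ + d = 0) :
    ¬∃ ρ : ℚ,
      (3 * b * d : ℝ) * θ⁻¹ + 2 * b * c + 3 * a * c * θ =
        ρ * ((9 * a * d : ℝ) * θ⁻¹ + (b ^ 2 + 3 * a * c) + 3 * a * b * θ) := by
  rintro ⟨ρ, h⟩
  have hinv : θ⁻¹ * θ = 1 := inv_mul_cancel₀ hθ0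
  have key : ((3 * b * d - 9 * a * d * ρ : ℚ) : ℝ)
      + ((2 * b * c - ρ * (b ^ 2 + 3 * a * c) : ℚ)) * θ
      + ((3 * a * c - 3 * a * b * ρ : ℚ)) * θ ^ 2 = 0 := by
    have h2 := congrArg (· * θ) h
    push_cast
    linear_combination h2 - ((3:ℝ) * b * d - 9 * a * d * ρ) * hinv
  obtain ⟨hp, hq, hr⟩ := hdeg3 _ _ _ key
  have ha' : (a : ℚ) ≠ 0 := Int.cast_ne_zero.mpr ha
  have hd' : (d : ℚ) ≠ 0 := Int.cast_ne_zero.mpr hd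
  have hb' : (b : ℚ) ≠ 0 := Int.cast_ne_zero.mpr hb
  have hbc' : (b : ℚ) ^ 2 - 3 * a * c ≠ 0 := by
    exact_mod_cast fun h => hbc (by exact_mod_cast h)
  -- from hp: b = 3aρ ; from hr: c = bρ ; so b² = 3ac
  apply hbc'
  have h1 : (b : ℚ) = 3 * a * ρ :=
    mul_left_cancel₀ (mul_ne_zero three_ne_zero hd')
      (by linear_combination hp : 3 * (d : ℚ) * b = 3 * d * (3 * a * ρ))
  have h3a : (3 * (a : ℚ)) ≠ 0 := mul_ne_zero three_ne_zero ha'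
  have h2 : (c : ℚ) = b * ρ :=
    mul_left_cancel₀ h3a (by linarith)
  linear_combination (b : ℚ) * h1 - 3 * a * h2
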